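/- Fuglede's theorem: if N is a bounded normal operator on a Hilbert space and T is a bounded operator with T N = N T, then T N* = N* T. Consequently the commutant of a normal operator is a self-adjoint algebra. -/

import Mathlib

open ContinuousLinearMap NormedSpace

private lemma skew_exp_norm_le {H : Type*} [NormedAddCommGroup H] [InnerProductSpace ℂ H]
    [CompleteSpace H] (a : H →L[ℂ] H) (ha : star a = -a) : ‖exp a‖ ≤ 1 := by
  let +nondep : NormedAlgebra ℚ (H →L[ℂ] H) := .restrictScalars ℚ ℂ _
  have h1 : star (exp a) * exp a = 1 := by
    rw [star_exp, ha, ← exp_add_of_commute ((Commute.refl a).neg_left), neg_add_cancel, exp_zero]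
  have h2 := CStarRing.norm_star_mul_self (x := exp a)
  rw [h1] at h2
  have h3 : ‖(1 : H →L[ℂ] H)‖ ≤ 1 := by
    rw [ContinuousLinearMap.one_def]; exact ContinuousLinearMap.norm_id_le
  nlinarith [norm_nonneg (exp a)]

private lemma fuglede_aux {H : Type*} [NormedAddCommGroup H] [InnerProductSpace ℂ H]
    [CompleteSpace H] (N T : H →L[ℂ] H) (hN : Commute N (star N)) (hTN : Commute T N) :
    Commute T (star N) := by
  let +nondep : NormedAlgebra ℚ (H →L[ℂ] H) := .restrictScalars ℚ ℂ _
  set b := star N with hb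
  -- key commutation facts
  have hTexp : ∀ c : ℂ, T * exp (c • N) = exp (c • N) * T := fun c =>
    ((hTN.smul_right c).exp_right).eq
  -- the entire function
  set g : ℂ → (H →L[ℂ] H) := fun z => exp (z • b) * T * exp (z • (-b)) with hg
  have hskew : ∀ z : ℂ, star (z • b - (starRingEnd ℂ z) • N) = -(z • b - (starRingEnd ℂ z) • N) := by
    intro z
    simp [hb, star_smul, sub_eq_add_neg, add_comm]
  have hbdd : ∀ z : ℂ, ‖g z‖ ≤ ‖T‖ := by
    intro z
    set c := starRingEnd ℂ z with hc
    have hcomm1 : Commute (z • b) (-(c • N)) := ((hN.symm.smul_left z).smul_right c).neg_right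
    have h1 : exp (z • b - c • N) = exp (z • b) * exp (-(c • N)) := by
      rw [sub_eq_add_neg, exp_add_of_commute hcomm1]
    have h2 : exp (c • N - z • b) = exp (c • N) * exp (z • (-b)) := by
      rw [smul_neg, sub_eq_add_neg, exp_add_of_commute (((hN.smul_left c).smul_right z).neg_right)]
    have h3 : exp (-(c • N)) * exp (c • N) = 1 := by
      rw [← exp_add_of_commute ((Commute.refl (c • N)).neg_left), neg_add_cancel, exp_zero]
    have hrw : g z = exp (z • b - c • N) * T * exp (c • N - z • b) := by
      have hT : exp (-(c • N)) * T = T * exp (-(c • N)) :=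
        ((((hTN.smul_right c).neg_right).symm).exp_left).eq
      rw [h1, h2, hg]
      simp only [mul_assoc, hT]
      rw [← mul_assoc (exp (-(c • N))), h3, one_mul]
    rw [hrw]
    have e1 : ‖exp (z • b - c • N)‖ ≤ 1 := skew_exp_norm_le _ (hskew z)
    have e2 : ‖exp (c • N - z • b)‖ ≤ 1 := by
      apply skew_exp_norm_le
      rw [← neg_sub (z • b) (c • N), star_neg, hskew z, neg_neg]
    calc ‖exp (z • b - c • N) * T * exp (c • N - z • b)‖
        ≤ ‖exp (z • b - c • N) * T‖ * ‖exp (c • N - z • b)‖ := norm_mul_le _ _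
      _ ≤ ‖exp (z • b - c • N)‖ * ‖T‖ * ‖exp (c • N - z • b)‖ := by
          gcongr; exact norm_mul_le _ _
      _ ≤ 1 * ‖T‖ * 1 := by gcongr
      _ = ‖T‖ := by ring
  have hdiff : Differentiable ℂ g := by
    have d1 : Differentiable ℂ fun z : ℂ => exp (z • b) := fun z =>
      (hasDerivAt_exp_smul_const (𝕂 := ℂ) b z).differentiableAt
    have d2 : Differentiable ℂ fun z : ℂ => exp (z • (-b)) := fun z =>
      (hasDerivAt_exp_smul_const (𝕂 := ℂ) (-b) z).differentiableAt
    exact (d1.mul (differentiable_const T)).mul d2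
  have hconst : ∀ z : ℂ, g z = g 0 := by
    intro z
    apply hdiff.apply_eq_apply_of_bounded
    refine isBounded_iff_forall_norm_le.2 ⟨‖T‖, ?_⟩
    rintro _ ⟨z, rfl⟩
    exact hbdd z
  have hg0 : g 0 = T := by simp [hg, exp_zero]
  have key : ∀ z : ℂ, exp (z • b) * T = T * exp (z • b) := by
    intro z
    have h : exp (z • b) * T * exp (z • (-b)) = T := (hconst z).trans hg0
    have h3 : exp (z • (-b)) * exp (z • b) = 1 := by
      rw [smul_neg, ← exp_add_of_commute ((Commute.refl (z • b)).neg_left), neg_add_cancel,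
        exp_zero]
    have h4 := congrArg (· * exp (z • b)) h
    simpa only [mul_assoc, h3, mul_one] using h4
  -- differentiate at 0
  have h1 : HasDerivAt (fun z : ℂ => exp (z • b) * T) (b * T) 0 := by
    have := (hasDerivAt_exp_smul_const' (𝕂 := ℂ) b 0).mul_const T
    simpa using this
  have h2 : HasDerivAt (fun z : ℂ => exp (z • b) * T) (T * b) 0 := by
    have := (hasDerivAt_exp_smul_const' (𝕂 := ℂ) b 0).const_mul T
    simpa [funext key] using this
  exact (h1.unique h2).symm

theorem stmt_3 {H : Type*} [NormedAddCommGroup H] [InnerProductSpace ℂ H] [CompleteSpace H]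
    (N T : H →L[ℂ] H)
    (hN : N ∘L ContinuousLinearMap.adjoint N = ContinuousLinearMap.adjoint N ∘L N)
    (hTN : T ∘L N = N ∘L T) :
    T ∘L ContinuousLinearMap.adjoint N = ContinuousLinearMap.adjoint N ∘L T ∧
      ContinuousLinearMap.adjoint T ∘L N = N ∘L ContinuousLinearMap.adjoint T := by
  simp only [← ContinuousLinearMap.star_eq_adjoint, ← ContinuousLinearMap.mul_def] at hN hTN ⊢
  have h := fuglede_aux N T hN hTN
  refine ⟨h.eq, ?_⟩
  have h2 := congrArg star h.eq
  simpa [star_mul] using h2.symm
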